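/- Define q₀(x) = (N f_{T|X}(0|x))⁻¹ and r₀(x, m) = f_{M|T,X}(m|0,x) / (N f_{T|X}(1|x) f_{M|T,X}(m|1,x)). Then for every measurable function v : ℝ^{r₁} × ℝ^{r₂} → ℝ such that T·r₀(X,M)·v(X,M) and (1−T)·q₀(X)·v(X,M) are integrable, E[T · r₀(X, M) · v(X, M)] = E[(1 − T) · q₀(X) · v(X, M)]. -/

import Mathlib

open MeasureTheory ProbabilityTheory

/-- Lemma 1 of the paper: with `q₀(x) = (N f_{T|X}(0|x))⁻¹` and
`r₀(x,m) = f_{M|T,X}(m|0,x) / (N f_{T|X}(1|x) f_{M|T,X}(m|1,x))`, for every measurable `v`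
with the displayed integrability,
`E[T · r₀(X,M) · v(X,M)] = E[(1−T) · q₀(X) · v(X,M)]`. -/
theorem covariate_balancing_identity
    {Ω : Type*} [MeasurableSpace Ω] (P : Measure Ω) [IsProbabilityMeasure P]
    (r₁ r₂ : ℕ)
    (T : Ω → Bool) (X : Ω → (Fin r₁ → ℝ)) (M : Ω → (Fin r₂ → ℝ))
    (hT : Measurable T) (hX : Measurable X) (hM : Measurable M)
    -- the joint law of (T, X, M) has a strictly positive density f with respect to
    -- (counting measure on {0,1}) × Lebesgue × Lebesgue
    (f : Bool → (Fin r₁ → ℝ) → (Fin r₂ → ℝ) → ℝ)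
    (hf_meas : Measurable (fun p : Bool × (Fin r₁ → ℝ) × (Fin r₂ → ℝ) => f p.1 p.2.1 p.2.2))
    (hf_pos : ∀ t x m, 0 < f t x m)
    (hlaw : P.map (fun ω => (T ω, X ω, M ω)) =
      ((Measure.count : Measure Bool).prod
        ((volume : Measure (Fin r₁ → ℝ)).prod (volume : Measure (Fin r₂ → ℝ)))).withDensity
        (fun p => ENNReal.ofReal (f p.1 p.2.1 p.2.2)))
    (N : ℕ) (hN : 0 < N)
    -- conditional densities
    (fX : (Fin r₁ → ℝ) → ℝ)
    (hfX : ∀ x, fX x = (∫ m, f true x m) + (∫ m, f false x m))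
    (fTX : Bool → (Fin r₁ → ℝ) → ℝ)
    (hfTX : ∀ t x, fTX t x = (∫ m, f t x m) / fX x)
    (fMTX : (Fin r₂ → ℝ) → Bool → (Fin r₁ → ℝ) → ℝ)
    (hfMTX : ∀ m t x, fMTX m t x = f t x m / (∫ m', f t x m'))
    -- the weight functions
    (q₀ : (Fin r₁ → ℝ) → ℝ)
    (hq₀ : ∀ x, q₀ x = ((N : ℝ) * fTX false x)⁻¹)
    (r₀ : (Fin r₁ → ℝ) → (Fin r₂ → ℝ) → ℝ)
    (hr₀ : ∀ x m, r₀ x m = fMTX m false x / ((N : ℝ) * fTX true x * fMTX m true x))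
    -- the test function
    (v : (Fin r₁ → ℝ) → (Fin r₂ → ℝ) → ℝ) (hv : Measurable (Function.uncurry v))
    (hint1 : Integrable (fun ω => if T ω then r₀ (X ω) (M ω) * v (X ω) (M ω) else 0) P)
    (hint2 : Integrable (fun ω => if T ω then 0 else q₀ (X ω) * v (X ω) (M ω)) P) :
    ∫ ω, (if T ω then r₀ (X ω) (M ω) * v (X ω) (M ω) else 0) ∂P
      = ∫ ω, (if T ω then 0 else q₀ (X ω) * v (X ω) (M ω)) ∂P := by
  classical
  set Z := (Fin r₁ → ℝ) × (Fin r₂ → ℝ) with hZ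
  set ρ : Measure Z := (volume : Measure (Fin r₁ → ℝ)).prod (volume : Measure (Fin r₂ → ℝ))
    with hρ
  set ν : Measure (Bool × Z) := (Measure.count : Measure Bool).prod ρ with hν
  set φ : Ω → Bool × Z := fun ω => (T ω, X ω, M ω) with hφdef
  have hφ : Measurable φ := hT.prodMk (hX.prodMk hM)
  -- measurability of the various functions
  have hfm : ∀ t : Bool, Measurable (fun z : Z => f t z.1 z.2) := fun t =>
    hf_meas.comp measurable_prodMk_left
  have hfm2 : ∀ t : Bool, Measurable (fun x : Fin r₁ → ℝ => ∫ m, f t x m) := fun t =>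
    ((hfm t).stronglyMeasurable.integral_prod_right').measurable
  have hvm : Measurable (fun z : Z => v z.1 z.2) := hv
  have hr₀m : Measurable (fun z : Z => r₀ z.1 z.2) := by
    have : (fun z : Z => r₀ z.1 z.2) = fun z : Z =>
        (f false z.1 z.2 / (∫ m', f false z.1 m')) /
          ((N : ℝ) * ((∫ m, f true z.1 m) / ((∫ m, f true z.1 m) + (∫ m, f false z.1 m))) *
            (f true z.1 z.2 / (∫ m', f true z.1 m'))) := by
      funext z; rw [hr₀, hfMTX, hfMTX, hfTX, hfX]
    rw [this]
    exact (((hfm false).div ((hfm2 false).comp measurable_fst)).div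
      (((measurable_const.mul (((hfm2 true).comp measurable_fst).div
        (((hfm2 true).comp measurable_fst).add ((hfm2 false).comp measurable_fst)))).mul
        ((hfm true).div ((hfm2 true).comp measurable_fst)))))
  have hq₀m : Measurable q₀ := by
    have : q₀ = fun x => ((N : ℝ) *
        ((∫ m, f false x m) / ((∫ m, f true x m) + (∫ m, f false x m))))⁻¹ := by
      funext x; rw [hq₀, hfTX, hfX]
    rw [this]
    exact (measurable_const.mul ((hfm2 false).div ((hfm2 true).add (hfm2 false)))).inv
  -- the uncurried integrands
  set g₁ : Bool × Z → ℝ := fun p => if p.1 then r₀ p.2.1 p.2.2 * v p.2.1 p.2.2 else 0 with hg₁def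
  set g₂ : Bool × Z → ℝ := fun p => if p.1 then 0 else q₀ p.2.1 * v p.2.1 p.2.2 with hg₂def
  have hset : MeasurableSet {p : Bool × Z | p.1 = true} :=
    measurable_fst (measurableSet_singleton true)
  have hg₁m : Measurable g₁ :=
    Measurable.ite hset ((hr₀m.comp measurable_snd).mul (hvm.comp measurable_snd))
      measurable_const
  have hg₂m : Measurable g₂ :=
    Measurable.ite hset measurable_const
      (((hq₀m.comp measurable_fst).comp measurable_snd).mul (hvm.comp measurable_snd))
  -- transfer to the pushforward measure
  have hmap1 : ∫ ω, (if T ω then r₀ (X ω) (M ω) * v (X ω) (M ω) else 0) ∂P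
      = ∫ p, g₁ p ∂(P.map φ) :=
    (integral_map hφ.aemeasurable hg₁m.aestronglyMeasurable).symm
  have hmap2 : ∫ ω, (if T ω then 0 else q₀ (X ω) * v (X ω) (M ω)) ∂P
      = ∫ p, g₂ p ∂(P.map φ) :=
    (integral_map hφ.aemeasurable hg₂m.aestronglyMeasurable).symm
  have hmapint1 : Integrable g₁ (P.map φ) :=
    (integrable_map_measure hg₁m.aestronglyMeasurable hφ.aemeasurable).mpr hint1
  have hmapint2 : Integrable g₂ (P.map φ) :=
    (integrable_map_measure hg₂m.aestronglyMeasurable hφ.aemeasurable).mpr hint2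
  -- the density as an ℝ≥0-valued function
  set w : Bool × Z → NNReal := fun p => (f p.1 p.2.1 p.2.2).toNNReal with hwdef
  have hw : Measurable w := hf_meas.real_toNNReal
  have hdens : (fun p : Bool × Z => ENNReal.ofReal (f p.1 p.2.1 p.2.2))
      = fun p => ((w p : NNReal) : ENNReal) := rfl
  have hlaw' : P.map φ = ν.withDensity (fun p => ((w p : NNReal) : ENNReal)) := by
    rw [← hdens]; exact hlaw
  -- rewrite the integrals as integrals against ν
  have hI1 : ∫ p, g₁ p ∂(P.map φ) = ∫ p, w p • g₁ p ∂ν := by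
    rw [hlaw']; exact integral_withDensity_eq_integral_smul hw g₁
  have hI2 : ∫ p, g₂ p ∂(P.map φ) = ∫ p, w p • g₂ p ∂ν := by
    rw [hlaw']; exact integral_withDensity_eq_integral_smul hw g₂
  have hIint1 : Integrable (fun p => w p • g₁ p) ν := by
    rw [← integrable_withDensity_iff_integrable_smul hw, ← hlaw']; exact hmapint1
  have hIint2 : Integrable (fun p => w p • g₂ p) ν := by
    rw [← integrable_withDensity_iff_integrable_smul hw, ← hlaw']; exact hmapint2
  -- split the count measure on Bool
  have hcount : (Measure.count : Measure Bool) = Measure.dirac true + Measure.dirac false :=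
    Measure.sum_bool _
  have hνsplit : ν = (Measure.dirac true).prod ρ + (Measure.dirac false).prod ρ := by
    rw [hν, hcount, Measure.add_prod]
  have key : ∀ (h : Bool × Z → ℝ), Measurable h → Integrable h ν →
      ∫ p, h p ∂ν = (∫ z, h (true, z) ∂ρ) + ∫ z, h (false, z) ∂ρ := by
    intro h hm hint
    rw [hνsplit] at hint
    rw [hνsplit, integral_add_measure (integrable_add_measure.mp hint).1
      (integrable_add_measure.mp hint).2, Measure.dirac_prod, Measure.dirac_prod,
      integral_map measurable_prodMk_left.aemeasurable hm.aestronglyMeasurable,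
      integral_map measurable_prodMk_left.aemeasurable hm.aestronglyMeasurable]
  have hwg₁m : Measurable (fun p => w p • g₁ p) := hw.smul hg₁m
  have hwg₂m : Measurable (fun p => w p • g₂ p) := hw.smul hg₂m
  have hL : ∫ p, w p • g₁ p ∂ν
      = ∫ z : Z, (f true z.1 z.2).toNNReal • (r₀ z.1 z.2 * v z.1 z.2) ∂ρ := by
    rw [key _ hwg₁m hIint1]
    simp [hg₁def, hwdef]
  have hR : ∫ p, w p • g₂ p ∂ν
      = ∫ z : Z, (f false z.1 z.2).toNNReal • (q₀ z.1 * v z.1 z.2) ∂ρ := by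
    rw [key _ hwg₂m hIint2]
    simp [hg₂def, hwdef]
  -- almost everywhere, the conditional densities are genuinely integrable in m
  have hprob : IsProbabilityMeasure (P.map φ) := Measure.isProbabilityMeasure_map hφ.aemeasurable
  have htot : ∫⁻ p, ENNReal.ofReal (f p.1 p.2.1 p.2.2) ∂ν = 1 := by
    have h1 : (P.map φ) Set.univ = 1 := hprob.measure_univ
    rw [hlaw, withDensity_apply _ MeasurableSet.univ, Measure.restrict_univ] at h1
    exact h1
  have hfin : ∀ t : Bool, ∫⁻ z : Z, ENNReal.ofReal (f t z.1 z.2) ∂ρ < ⊤ := by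
    intro t
    have hle : ∫⁻ p, ENNReal.ofReal (f p.1 p.2.1 p.2.2) ∂((Measure.dirac t).prod ρ)
        ≤ ∫⁻ p, ENNReal.ofReal (f p.1 p.2.1 p.2.2) ∂ν := by
      refine lintegral_mono' ?_ le_rfl
      rw [hνsplit]
      cases t
      · exact Measure.le_add_left le_rfl
      · exact Measure.le_add_right le_rfl
    rw [Measure.dirac_prod, lintegral_map (hf_meas.ennreal_ofReal) measurable_prodMk_left]
      at hle
    calc ∫⁻ z : Z, ENNReal.ofReal (f t z.1 z.2) ∂ρ ≤ 1 := le_trans hle (le_of_eq htot)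
    _ < ⊤ := ENNReal.one_lt_top
  have haeInt : ∀ t : Bool, ∀ᵐ x : Fin r₁ → ℝ,
      Integrable (fun m => f t x m) (volume : Measure (Fin r₂ → ℝ)) := by
    intro t
    have hmt : Measurable (fun z : Z => ENNReal.ofReal (f t z.1 z.2)) :=
      (hfm t).ennreal_ofReal
    have := hfin t
    rw [hρ, lintegral_prod _ hmt.aemeasurable] at this
    have hae : ∀ᵐ x : Fin r₁ → ℝ, ∫⁻ m, ENNReal.ofReal (f t x m) ∂volume < ⊤ :=
      ae_lt_top (Measurable.lintegral_prod_right hmt) this.ne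
    refine hae.mono fun x hx => ?_
    refine ⟨((hfm t).comp measurable_prodMk_left).aestronglyMeasurable, ?_⟩
    rw [hasFiniteIntegral_iff_ofReal (ae_of_all _ fun m => (hf_pos t x m).le)]
    exact hx
  -- the pointwise identity on the good set
  have hvolpos : (0 : ENNReal) < volume (Set.univ : Set (Fin r₂ → ℝ)) :=
    isOpen_univ.measure_pos volume Set.univ_nonempty
  have hptwise : ∀ᵐ z : Z ∂ρ,
      (f true z.1 z.2).toNNReal • (r₀ z.1 z.2 * v z.1 z.2)
        = (f false z.1 z.2).toNNReal • (q₀ z.1 * v z.1 z.2) := by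
    have hgood : ∀ᵐ x : Fin r₁ → ℝ,
        Integrable (fun m => f true x m) (volume : Measure (Fin r₂ → ℝ)) ∧
        Integrable (fun m => f false x m) (volume : Measure (Fin r₂ → ℝ)) :=
      (haeInt true).and (haeInt false)
    have hfst : ∀ᵐ z : Z ∂ρ,
        Integrable (fun m => f true z.1 m) (volume : Measure (Fin r₂ → ℝ)) ∧
        Integrable (fun m => f false z.1 m) (volume : Measure (Fin r₂ → ℝ)) :=
      (Measure.quasiMeasurePreserving_fst).ae hgood
    refine hfst.mono fun z hz => ?_
    obtain ⟨hA, hB⟩ := hz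
    set x := z.1
    set m := z.2
    have hApos : 0 < ∫ m, f true x m := by
      rw [integral_pos_iff_support_of_nonneg (fun m => (hf_pos true x m).le) hA]
      have : Function.support (fun m => f true x m) = Set.univ :=
        Set.eq_univ_of_forall fun m => (hf_pos true x m).ne'
      rw [this]; exact hvolpos
    have hBpos : 0 < ∫ m, f false x m := by
      rw [integral_pos_iff_support_of_nonneg (fun m => (hf_pos false x m).le) hB]
      have : Function.support (fun m => f false x m) = Set.univ :=
        Set.eq_univ_of_forall fun m => (hf_pos false x m).ne'
      rw [this]; exact hvolpos
    have hFpos : 0 < (∫ m, f true x m) + ∫ m, f false x m := by positivity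
    rw [NNReal.smul_def, NNReal.smul_def, Real.coe_toNNReal _ (hf_pos true x m).le,
      Real.coe_toNNReal _ (hf_pos false x m).le, hr₀, hq₀, hfMTX, hfMTX, hfTX, hfTX,
      hfX]
    have ha : f true x m ≠ 0 := (hf_pos true x m).ne'
    have hb : f false x m ≠ 0 := (hf_pos false x m).ne'
    have hA0 : (∫ m, f true x m) ≠ 0 := hApos.ne'
    have hB0 : (∫ m, f false x m) ≠ 0 := hBpos.ne'
    have hF0 : ((∫ m, f true x m) + ∫ m, f false x m) ≠ 0 := hFpos.ne'
    have hN0 : (N : ℝ) ≠ 0 := Nat.cast_ne_zero.mpr hN.ne'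
    field_simp
    have hinv : f true x m * (f true x m)⁻¹ = 1 := mul_inv_cancel₀ ha
    linear_combination ((f false x m * ∫ m, f true x m) * v x m * (∫ m', f false x m')⁻¹ *
      (N : ℝ)⁻¹ + (f false x m * ∫ m', f false x m') * v x m * (∫ m', f false x m')⁻¹ *
      (N : ℝ)⁻¹) * hinv
  rw [hmap1, hmap2, hI1, hI2, hL, hR]
  exact integral_congr_ae hptwise
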